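/- Let 1 ≤ m ≤ n and π ∈ S_{m,n}. Then E°_π = {(X,Y) ∈ E : (YX)_{π(i)π(i)} = (XY)_{ii} for all 1 ≤ i ≤ m, and the scalars (XY)_{11},…,(XY)_{mm} are pairwise distinct and nonzero}. -/

import Mathlib

open Matrix

/-- The ambient space `Mat(m,n,ℂ) × Mat(n,m,ℂ)`. -/
abbrev LUSpace (m n : ℕ) := Matrix (Fin m) (Fin n) ℂ × Matrix (Fin n) (Fin m) ℂ

/-- Lower triangular square matrix. -/
def LowerTri {k : ℕ} (M : Matrix (Fin k) (Fin k) ℂ) : Prop := ∀ i j : Fin k, i < j → M i j = 0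

/-- Upper triangular square matrix. -/
def UpperTri {k : ℕ} (M : Matrix (Fin k) (Fin k) ℂ) : Prop := ∀ i j : Fin k, j < i → M i j = 0

/-- The lower-upper scheme `E`. -/
def LU (m n : ℕ) : Set (LUSpace m n) :=
  { p | LowerTri (p.1 * p.2) ∧ UpperTri (p.2 * p.1) }

/-- The partial permutation matrix associated to `π ∈ S_{m,n}`. -/
def permMat {m n : ℕ} (π : Fin m ↪ Fin n) : Matrix (Fin m) (Fin n) ℂ :=
  fun i j => if π i = j then 1 else 0

/-- Invertible lower triangular m×m matrices. -/
def Bminus (m : ℕ) : Set (Matrix (Fin m) (Fin m) ℂ) := { b | IsUnit b ∧ LowerTri b }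

/-- Invertible upper triangular n×n matrices. -/
def Bplus (n : ℕ) : Set (Matrix (Fin n) (Fin n) ℂ) := { c | IsUnit c ∧ UpperTri c }

/-- Lower unitriangular m×m matrices. -/
def Nminus (m : ℕ) : Set (Matrix (Fin m) (Fin m) ℂ) := { b | LowerTri b ∧ ∀ i, b i i = 1 }

/-- Upper unitriangular n×n matrices. -/
def Nplus (n : ℕ) : Set (Matrix (Fin n) (Fin n) ℂ) := { c | UpperTri c ∧ ∀ j, c j j = 1 }

/-- `E°_π`. -/
def Eopen {m n : ℕ} (π : Fin m ↪ Fin n) : Set (LUSpace m n) :=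
  { p | ∃ b ∈ Nminus m, ∃ c ∈ Nplus n, ∃ s t : Fin m → ℂ,
      (∀ i, s i * t i ≠ 0) ∧ (∀ i i' : Fin m, i ≠ i' → s i * t i ≠ s i' * t i') ∧
      p.1 = b * (Matrix.diagonal s * permMat π) * c⁻¹ ∧
      p.2 = c * ((permMat π)ᵀ * Matrix.diagonal t) * b⁻¹ }

/-- Coordinates of a point of `LUSpace` as a function on the variable-index type. -/
def coordsOf {m n : ℕ} (p : LUSpace m n) : (Fin m × Fin n) ⊕ (Fin n × Fin m) → ℂ
  | .inl ij => p.1 ij.1 ij.2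
  | .inr ji => p.2 ji.1 ji.2

/-- Zariski closure of a subset of `LUSpace m n`: the common zero set of all polynomials
vanishing identically on the subset. -/
def zclosure {m n : ℕ} (S : Set (LUSpace m n)) : Set (LUSpace m n) :=
  { p | ∀ f : MvPolynomial ((Fin m × Fin n) ⊕ (Fin n × Fin m)) ℂ,
      (∀ q ∈ S, MvPolynomial.eval (coordsOf q) f = 0) → MvPolynomial.eval (coordsOf p) f = 0 }

/-- `E_π`, the Zariski closure of `E°_π`. -/
def Ecomp {m n : ℕ} (π : Fin m ↪ Fin n) : Set (LUSpace m n) := zclosure (Eopen π)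

/-- Zariski closure in the matrix space `Mat(m,n,ℂ)`. -/
def mzclosure {m n : ℕ} (S : Set (Matrix (Fin m) (Fin n) ℂ)) : Set (Matrix (Fin m) (Fin n) ℂ) :=
  { X | ∀ f : MvPolynomial (Fin m × Fin n) ℂ,
      (∀ Y ∈ S, MvPolynomial.eval (fun ij => Y ij.1 ij.2) f = 0) →
        MvPolynomial.eval (fun ij => X ij.1 ij.2) f = 0 }

section Tri
variable {k : ℕ} {M N : Matrix (Fin k) (Fin k) ℂ}

lemma lowerTri_iff : LowerTri M ↔ BlockTriangular M (OrderDual.toDual : Fin k → (Fin k)ᵒᵈ) := by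
  constructor <;> intro h i j hij
  exacts [h i j hij, h hij]

lemma upperTri_iff : UpperTri M ↔ BlockTriangular M (id : Fin k → Fin k) := by
  constructor <;> intro h i j hij
  exacts [h i j hij, h hij]

lemma LowerTri.mul (hM : LowerTri M) (hN : LowerTri N) : LowerTri (M * N) :=
  lowerTri_iff.2 ((lowerTri_iff.1 hM).mul (lowerTri_iff.1 hN))

lemma UpperTri.mul (hM : UpperTri M) (hN : UpperTri N) : UpperTri (M * N) :=
  upperTri_iff.2 ((upperTri_iff.1 hM).mul (upperTri_iff.1 hN))

lemma LowerTri.det (hM : LowerTri M) : M.det = ∏ i, M i i :=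
  det_of_lowerTriangular M (lowerTri_iff.1 hM)

lemma UpperTri.det (hM : UpperTri M) : M.det = ∏ i, M i i :=
  det_of_upperTriangular (upperTri_iff.1 hM)

lemma LowerTri.inv (hM : LowerTri M) (h : IsUnit M.det) : LowerTri M⁻¹ := by
  letI := M.invertibleOfIsUnitDet h
  exact lowerTri_iff.2 (blockTriangular_inv_of_blockTriangular (lowerTri_iff.1 hM))

lemma UpperTri.inv (hM : UpperTri M) (h : IsUnit M.det) : UpperTri M⁻¹ := by
  letI := M.invertibleOfIsUnitDet h
  exact upperTri_iff.2 (blockTriangular_inv_of_blockTriangular (upperTri_iff.1 hM))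

lemma LowerTri.mul_diag (hM : LowerTri M) (hN : LowerTri N) (i : Fin k) :
    (M * N) i i = M i i * N i i := by
  rw [Matrix.mul_apply]
  refine Finset.sum_eq_single i (fun j _ hj => ?_) (by simp)
  rcases lt_or_gt_of_ne hj with h | h
  · rw [hN j i h, mul_zero]
  · rw [hM i j h, zero_mul]

lemma UpperTri.mul_diag (hM : UpperTri M) (hN : UpperTri N) (i : Fin k) :
    (M * N) i i = M i i * N i i := by
  rw [Matrix.mul_apply]
  refine Finset.sum_eq_single i (fun j _ hj => ?_) (by simp)
  rcases lt_or_gt_of_ne hj with h | h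
  · rw [hM i j h, zero_mul]
  · rw [hN j i h, mul_zero]

lemma LowerTri.diag_inv_mul (hM : LowerTri M) (h : IsUnit M.det) (i : Fin k) :
    M i i * M⁻¹ i i = 1 := by
  have := hM.mul_diag (hM.inv h) i
  rw [Matrix.mul_nonsing_inv M h] at this
  rw [← this, Matrix.one_apply_eq]

lemma UpperTri.diag_inv_mul (hM : UpperTri M) (h : IsUnit M.det) (i : Fin k) :
    M i i * M⁻¹ i i = 1 := by
  have := hM.mul_diag (hM.inv h) i
  rw [Matrix.mul_nonsing_inv M h] at this
  rw [← this, Matrix.one_apply_eq]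

end Tri

section Char

lemma det_helper_comm {F : Type*} [Field F] {m n : ℕ} {u : F} (hu : u ≠ 0)
    (A : Matrix (Fin m) (Fin n) F) (B : Matrix (Fin n) (Fin m) F) :
    u ^ n * det (u • (1 : Matrix (Fin m) (Fin m) F) - A * B)
      = u ^ m * det (u • (1 : Matrix (Fin n) (Fin n) F) - B * A) := by
  have h1 : u • (1 : Matrix (Fin m) (Fin m) F) - A * B = u • (1 - (u⁻¹ • A) * B) := by
    rw [smul_sub, Matrix.smul_mul, smul_smul, mul_inv_cancel₀ hu, one_smul]
  have h2 : u • (1 : Matrix (Fin n) (Fin n) F) - B * A = u • (1 - B * (u⁻¹ • A)) := by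
    rw [smul_sub, Matrix.mul_smul, smul_smul, mul_inv_cancel₀ hu, one_smul]
  rw [h1, h2, Matrix.det_smul, Matrix.det_smul, det_one_sub_mul_comm]
  simp only [Fintype.card_fin]
  ring

lemma det_usub_upper {F : Type*} [CommRing F] {k : ℕ} {M : Matrix (Fin k) (Fin k) F} (u : F)
    (hM : BlockTriangular M (id : Fin k → Fin k)) :
    det (u • (1 : Matrix (Fin k) (Fin k) F) - M) = ∏ i, (u - M i i) := by
  have h : BlockTriangular (u • (1 : Matrix (Fin k) (Fin k) F) - M) (id : Fin k → Fin k) := by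
    intro i j hij
    have hne : i ≠ j := (ne_of_gt hij)
    simp [Matrix.sub_apply, Matrix.one_apply_ne hne, hM hij]
  rw [det_of_upperTriangular h]
  refine Finset.prod_congr rfl fun i _ => by simp

end Char

lemma diag_unique {m n : ℕ} (X' : Matrix (Fin m) (Fin n) ℂ) (Y' : Matrix (Fin n) (Fin m) ℂ)
    (d : Fin m → ℂ) (h1 : X' * Y' = Matrix.diagonal d) (hB : UpperTri (Y' * X'))
    (hd0 : ∀ i, d i ≠ 0) (hdist : ∀ i i', i ≠ i' → d i ≠ d i')
    {j : Fin m} {k k' : Fin n} (hk : (Y' * X') k k = d j) (hk' : (Y' * X') k' k' = d j) :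
    k = k' := by
  classical
  set F := FractionRing (Polynomial ℂ)
  set φ : Polynomial ℂ →+* F := algebraMap (Polynomial ℂ) F with hφ
  set ψ : ℂ →+* F := φ.comp (Polynomial.C : ℂ →+* Polynomial ℂ) with hψ
  have hinj : Function.Injective φ := IsFractionRing.injective (Polynomial ℂ) F
  set u : F := φ Polynomial.X with hu'
  have hu : u ≠ 0 := fun h => Polynomial.X_ne_zero (hinj (h.trans (map_zero φ).symm))
  set B := Y' * X' with hBdef
  -- identity in F
  have key : u ^ n * det (u • (1 : Matrix (Fin m) (Fin m) F) - (X'.map ψ) * (Y'.map ψ))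
      = u ^ m * det (u • (1 : Matrix (Fin n) (Fin n) F) - (Y'.map ψ) * (X'.map ψ)) :=
    det_helper_comm hu _ _
  have hmap1 : (X'.map ψ) * (Y'.map ψ) = Matrix.diagonal (fun i => ψ (d i)) := by
    rw [← Matrix.map_mul, h1, Matrix.diagonal_map (map_zero ψ)]
  have hmap2 : (Y'.map ψ) * (X'.map ψ) = B.map ψ := by rw [← Matrix.map_mul]
  have hdet1 : det (u • (1 : Matrix (Fin m) (Fin m) F) - (X'.map ψ) * (Y'.map ψ))
      = ∏ i, (u - ψ (d i)) := by
    rw [hmap1, det_usub_upper]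
    · exact Finset.prod_congr rfl fun i _ => by rw [Matrix.diagonal_apply_eq]
    · intro a b hab
      exact Matrix.diagonal_apply_ne _ (ne_of_gt hab)
  have hdet2 : det (u • (1 : Matrix (Fin n) (Fin n) F) - (Y'.map ψ) * (X'.map ψ))
      = ∏ l, (u - ψ (B l l)) := by
    rw [hmap2, det_usub_upper]
    · exact Finset.prod_congr rfl fun i _ => by rw [Matrix.map_apply]
    · intro a b hab
      rw [Matrix.map_apply, hB a b hab, map_zero]
  rw [hdet1, hdet2] at key
  -- transfer to polynomial ring
  have hpoly : (Polynomial.X : Polynomial ℂ) ^ n * ∏ i, (Polynomial.X - Polynomial.C (d i))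
      = Polynomial.X ^ m * ∏ l, (Polynomial.X - Polynomial.C (B l l)) := by
    apply hinj
    rw [_root_.map_mul, _root_.map_mul, map_pow, map_pow, map_prod, map_prod]
    simp only [map_sub]
    exact key
  -- multiset of roots
  set s : Multiset ℂ := Multiset.replicate n 0 + Finset.univ.val.map d with hs
  set t : Multiset ℂ := Multiset.replicate m 0 + Finset.univ.val.map (fun l => B l l) with ht
  have hprod : ∀ (N : ℕ) (v : Multiset ℂ),
      ((Multiset.replicate N (0:ℂ) + v).map (fun a => Polynomial.X - Polynomial.C a)).prod
        = Polynomial.X ^ N * (v.map (fun a => Polynomial.X - Polynomial.C a)).prod := by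
    intro N v
    rw [Multiset.map_add, Multiset.prod_add, Multiset.map_replicate]
    simp [Multiset.prod_replicate]
  have hseq : s = t := by
    have h1' : (s.map (fun a => Polynomial.X - Polynomial.C a)).prod
        = (t.map (fun a => Polynomial.X - Polynomial.C a)).prod := by
      rw [hs, ht, hprod, hprod, Multiset.map_map, Multiset.map_map]
      rw [← Finset.prod_eq_multiset_prod, ← Finset.prod_eq_multiset_prod]
      exact hpoly
    have := congrArg Polynomial.roots h1'
    rwa [Polynomial.roots_multiset_prod_X_sub_C, Polynomial.roots_multiset_prod_X_sub_C] at this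
  -- count d j on both sides
  have hcount := congrArg (Multiset.count (d j)) hseq
  rw [hs, ht, Multiset.count_add, Multiset.count_add, Multiset.count_replicate,
    Multiset.count_replicate, if_neg (fun h => hd0 j h.symm), if_neg (fun h => hd0 j h.symm),
    Multiset.count_map, Multiset.count_map, zero_add, zero_add] at hcount
  have hfil : Finset.univ.filter (fun a => d j = d a) = {j} := by
    apply Finset.eq_singleton_iff_unique_mem.2
    refine ⟨Finset.mem_filter.2 ⟨Finset.mem_univ _, rfl⟩, fun x hx => ?_⟩
    by_contra hxj
    exact hdist x j hxj (Finset.mem_filter.1 hx).2.symm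
  have hleft : Multiset.card (Multiset.filter (fun a => d j = d a) Finset.univ.val) = 1 := by
    rw [← Finset.filter_val, hfil]
    rfl
  rw [hleft] at hcount
  have hcard : (Finset.univ.filter (fun l => d j = B l l)).card = 1 := by
    have : (Finset.univ.filter (fun l => d j = B l l)).card
        = Multiset.card (Multiset.filter (fun l => d j = B l l) Finset.univ.val) := by
      rw [Finset.card_def, Finset.filter_val]
    rw [this, ← hcount]
  obtain ⟨a, ha⟩ := Finset.card_eq_one.1 hcard
  have hkmem : k ∈ Finset.univ.filter (fun l => d j = B l l) :=
    Finset.mem_filter.2 ⟨Finset.mem_univ _, hk.symm⟩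
  have hk'mem : k' ∈ Finset.univ.filter (fun l => d j = B l l) :=
    Finset.mem_filter.2 ⟨Finset.mem_univ _, hk'.symm⟩
  rw [ha, Finset.mem_singleton] at hkmem hk'mem
  rw [hkmem, hk'mem]

section Gcol
variable {m : ℕ}

noncomputable def gcol (A : Matrix (Fin m) (Fin m) ℂ) (j : Fin m) : ℕ → ℂ
  | i =>
    if i ≤ (j : ℕ) then (if i = (j : ℕ) then 1 else 0)
    else if h : i < m then
      (∑ k : Fin i, A ⟨i, h⟩ ⟨k, k.2.trans h⟩ * gcol A j k) / (A j j - A ⟨i, h⟩ ⟨i, h⟩)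
    else 0
  termination_by i => i
  decreasing_by exact k.2

lemma gcol_lt (A : Matrix (Fin m) (Fin m) ℂ) (j : Fin m) (i : ℕ) (h : i < (j : ℕ)) :
    gcol A j i = 0 := by
  rw [gcol, if_pos h.le, if_neg (Nat.ne_of_lt h)]

lemma gcol_eq (A : Matrix (Fin m) (Fin m) ℂ) (j : Fin m) : gcol A j (j : ℕ) = 1 := by
  rw [gcol, if_pos le_rfl, if_pos rfl]

lemma gcol_gt (A : Matrix (Fin m) (Fin m) ℂ) (j : Fin m) (i : Fin m) (h : (j : ℕ) < (i : ℕ)) :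
    gcol A j i = (∑ k : Fin (i : ℕ), A i ⟨k, k.2.trans i.2⟩ * gcol A j k)
      / (A j j - A i i) := by
  conv_lhs => rw [gcol]
  rw [if_neg (not_le.2 h), dif_pos i.2]

end Gcol

section Bmat
variable {m : ℕ}

noncomputable def bmat (A : Matrix (Fin m) (Fin m) ℂ) : Matrix (Fin m) (Fin m) ℂ :=
  fun i j => gcol A j i

lemma bmat_lower (A : Matrix (Fin m) (Fin m) ℂ) : LowerTri (bmat A) :=
  fun i j hij => gcol_lt A j i hij

lemma bmat_diag (A : Matrix (Fin m) (Fin m) ℂ) (i : Fin m) : bmat A i i = 1 := gcol_eq A i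

lemma bmat_conj (A : Matrix (Fin m) (Fin m) ℂ) (hA : LowerTri A)
    (hdist : ∀ i i' : Fin m, i ≠ i' → A i i ≠ A i' i') :
    A * bmat A = bmat A * Matrix.diagonal (fun i' => A i' i') := by
  ext i j
  rw [Matrix.mul_apply, Matrix.mul_diagonal]
  set F : ℕ → ℂ := fun k => if h : k < m then A i ⟨k, h⟩ * gcol A j k else 0 with hF
  have hFk : ∀ k : Fin m, F (k : ℕ) = A i k * gcol A j (k : ℕ) := fun k => by
    rw [hF]
    simp only [dif_pos k.2, Fin.eta]
  have h1 : ∑ k : Fin m, A i k * bmat A k j = ∑ k ∈ Finset.range m, F k := by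
    rw [← Fin.sum_univ_eq_sum_range F m]
    exact Finset.sum_congr rfl fun k _ => (hFk k).symm
  have h2 : ∑ k ∈ Finset.range m, F k = ∑ k ∈ Finset.range ((i : ℕ) + 1), F k := by
    refine (Finset.sum_subset (Finset.range_subset_range.2 i.2) fun x hx hx' => ?_).symm
    rw [hF]
    rcases lt_or_ge x m with h | h
    · have hxi : (i : ℕ) < x := by
        by_contra hc
        exact hx' (Finset.mem_range.2 (by omega))
      have hix : i < (⟨x, h⟩ : Fin m) := hxi
      simp only [dif_pos h, hA i ⟨x, h⟩ hix, zero_mul]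
    · simp only [dif_neg (not_lt.2 h)]
  have h3 : ∑ k ∈ Finset.range ((i : ℕ) + 1), F k = (∑ k ∈ Finset.range (i : ℕ), F k) + F i :=
    Finset.sum_range_succ F (i : ℕ)
  have h5 : ∑ k ∈ Finset.range (i : ℕ), F k
      = ∑ k : Fin (i : ℕ), A i ⟨(k : ℕ), k.2.trans i.2⟩ * gcol A j (k : ℕ) := by
    rw [← Fin.sum_univ_eq_sum_range F (i : ℕ)]
    refine Finset.sum_congr rfl fun k _ => ?_
    rw [hF]
    simp only [dif_pos (k.2.trans i.2)]
  set S := ∑ k : Fin (i : ℕ), A i ⟨(k : ℕ), k.2.trans i.2⟩ * gcol A j (k : ℕ) with hS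
  have hLHS : ∑ k : Fin m, A i k * bmat A k j = S + A i i * gcol A j (i : ℕ) := by
    rw [h1, h2, h3, h5, hFk i]
  rw [hLHS]
  show S + A i i * gcol A j (i : ℕ) = gcol A j (i : ℕ) * A j j
  rcases lt_trichotomy i j with hij | hij | hij
  · have hS0 : S = 0 := Finset.sum_eq_zero fun k _ => by
      rw [gcol_lt A j (k : ℕ) (lt_trans k.2 hij), mul_zero]
    rw [hS0, gcol_lt A j (i : ℕ) hij]
    ring
  · subst hij
    have hS0 : S = 0 := Finset.sum_eq_zero fun k _ => by
      rw [gcol_lt A i (k : ℕ) k.2, mul_zero]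
    rw [hS0, gcol_eq]
    ring
  · have hne : A j j - A i i ≠ 0 := sub_ne_zero.2 (hdist j i (ne_of_lt hij))
    rw [gcol_gt A j i hij]
    field_simp
    ring

end Bmat

section Support
variable {m n : ℕ}

lemma y_support {B : Matrix (Fin n) (Fin n) ℂ} {Y' : Matrix (Fin n) (Fin m) ℂ}
    {d : Fin m → ℂ} (hB : UpperTri B) (hcomm : B * Y' = Y' * Matrix.diagonal d)
    (j : Fin m) (p : Fin n) (hdiag : ∀ k : Fin n, B k k = d j → k = p) :
    ∀ k : Fin n, p < k → Y' k j = 0 := by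
  have main : ∀ r : ℕ, ∀ k : Fin n, n ≤ (k : ℕ) + r → p < k → Y' k j = 0 := by
    intro r
    induction r with
    | zero => intro k hk _; exact absurd k.2 (by omega)
    | succ r ih =>
      intro k hk hpk
      have hcol := congrFun (congrFun hcomm k) j
      rw [Matrix.mul_apply, Matrix.mul_diagonal] at hcol
      have hsum : ∑ l, B k l * Y' l j = B k k * Y' k j := by
        refine Finset.sum_eq_single k (fun l _ hl => ?_) (by simp)
        rcases lt_or_gt_of_ne hl with h | h
        · rw [hB k l h, zero_mul]
        · have hkl : (k : ℕ) < (l : ℕ) := h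
          rw [ih l (by omega) (lt_trans hpk h), mul_zero]
      rw [hsum] at hcol
      by_contra hY
      have hBk : B k k = d j := by
        have := hcol.trans (mul_comm (Y' k j) (d j))
        exact mul_right_cancel₀ hY this
      exact (ne_of_gt hpk) (hdiag k hBk)
  intro k hpk
  exact main n k (by omega) hpk

lemma x_support {B : Matrix (Fin n) (Fin n) ℂ} {X' : Matrix (Fin m) (Fin n) ℂ}
    {d : Fin m → ℂ} (hB : UpperTri B) (hcomm : X' * B = Matrix.diagonal d * X')
    (j : Fin m) (p : Fin n) (hdiag : ∀ k : Fin n, B k k = d j → k = p) :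
    ∀ k : Fin n, k < p → X' j k = 0 := by
  have main : ∀ r : ℕ, ∀ k : Fin n, (k : ℕ) < r → k < p → X' j k = 0 := by
    intro r
    induction r with
    | zero => intro k hk _; omega
    | succ r ih =>
      intro k hk hkp
      have hcol := congrFun (congrFun hcomm j) k
      rw [Matrix.mul_apply, Matrix.diagonal_mul] at hcol
      have hsum : ∑ l, X' j l * B l k = X' j k * B k k := by
        refine Finset.sum_eq_single k (fun l _ hl => ?_) (by simp)
        rcases lt_or_gt_of_ne hl with h | h
        · have hlk : (l : ℕ) < (k : ℕ) := h
          rw [ih l (by omega) (lt_trans h hkp), zero_mul]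
        · rw [hB l k h, mul_zero]
      rw [hsum] at hcol
      by_contra hX
      have hBk : B k k = d j := by
        have h1 : X' j k * B k k = X' j k * d j := by rw [hcol, mul_comm]
        exact mul_left_cancel₀ hX h1
      exact (ne_of_lt hkp) (hdiag k hBk)
  intro k hkp
  exact main n k k.2 hkp

end Support

section Cmat
variable {m n : ℕ}

noncomputable def cmat (π : Fin m ↪ Fin n) (X' : Matrix (Fin m) (Fin n) ℂ)
    (Y' : Matrix (Fin n) (Fin m) ℂ) (d : Fin m → ℂ) : Matrix (Fin n) (Fin n) ℂ :=
  fun l k =>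
    match Function.partialInv π k with
    | some j => Y' l j * (Y' (π j) j)⁻¹
    | none => (if l = k then 1 else 0) - ∑ j, (X' j k / d j) * Y' l j

variable (π : Fin m ↪ Fin n) (X' : Matrix (Fin m) (Fin n) ℂ)
    (Y' : Matrix (Fin n) (Fin m) ℂ) (d : Fin m → ℂ)

lemma cmat_col (l : Fin n) (j : Fin m) :
    cmat π X' Y' d l (π j) = Y' l j * (Y' (π j) j)⁻¹ := by
  simp only [cmat, Function.partialInv_left π.injective]

lemma cmat_none {k : Fin n} (hk : Function.partialInv π k = none) (l : Fin n) :
    cmat π X' Y' d l k = (if l = k then 1 else 0) - ∑ j, (X' j k / d j) * Y' l j := by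
  simp only [cmat, hk]

lemma partialInv_none_iff {k : Fin n} :
    Function.partialInv π k = none ↔ ∀ j, π j ≠ k := by
  constructor
  · intro hk j hj
    rw [← hj, Function.partialInv_left π.injective] at hk
    cases hk
  · intro h
    cases hp : Function.partialInv (⇑π) k with
    | none => rfl
    | some j =>
      exact absurd ((Function.partialInv_of_injective π.injective j k).1 hp) (h j)

end Cmat

section CmatFacts
variable {m n : ℕ} {π : Fin m ↪ Fin n} {X' : Matrix (Fin m) (Fin n) ℂ}
  {Y' : Matrix (Fin n) (Fin m) ℂ} {d : Fin m → ℂ}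

lemma orth (hXY : X' * Y' = Matrix.diagonal d) (j j' : Fin m) :
    ∑ k, X' j k * Y' k j' = if j = j' then d j else 0 := by
  have h := congrFun (congrFun hXY j) j'
  rw [Matrix.mul_apply] at h
  rw [h, Matrix.diagonal_apply]

lemma st_eq (hXY : X' * Y' = Matrix.diagonal d)
    (hx0 : ∀ (j : Fin m) (k : Fin n), k < π j → X' j k = 0)
    (hy0 : ∀ (j : Fin m) (k : Fin n), π j < k → Y' k j = 0) (j : Fin m) :
    X' j (π j) * Y' (π j) j = d j := by
  have h := orth hXY j j
  rw [if_pos rfl] at h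
  rw [← h]
  symm
  apply Finset.sum_eq_single (π j)
  · intro k _ hk
    rcases lt_or_gt_of_ne hk with hlt | hgt
    · rw [hx0 j k hlt, zero_mul]
    · rw [hy0 j k hgt, mul_zero]
  · intro h'
    exact absurd (Finset.mem_univ (π j)) h'

lemma cmat_upper (hXY : X' * Y' = Matrix.diagonal d)
    (hx0 : ∀ (j : Fin m) (k : Fin n), k < π j → X' j k = 0)
    (hy0 : ∀ (j : Fin m) (k : Fin n), π j < k → Y' k j = 0) :
    UpperTri (cmat π X' Y' d) := by
  intro l k hkl
  cases hp : Function.partialInv (⇑π) k with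
  | some j =>
    have hπ : π j = k := (Function.partialInv_of_injective π.injective j k).1 hp
    rw [show cmat π X' Y' d l k = Y' l j * (Y' (π j) j)⁻¹ by rw [← hπ]; exact cmat_col π X' Y' d l j]
    rw [hy0 j l (hπ ▸ hkl), zero_mul]
  | none =>
    rw [cmat_none π X' Y' d hp l, if_neg (ne_of_gt hkl)]
    rw [Finset.sum_eq_zero, sub_zero]
    intro j _
    rcases lt_or_ge (π j) l with h | h
    · rw [hy0 j l h, mul_zero]
    · rw [hx0 j k (lt_of_lt_of_le hkl h), zero_div, zero_mul]

lemma cmat_diag (hXY : X' * Y' = Matrix.diagonal d)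
    (hx0 : ∀ (j : Fin m) (k : Fin n), k < π j → X' j k = 0)
    (hy0 : ∀ (j : Fin m) (k : Fin n), π j < k → Y' k j = 0)
    (hd0 : ∀ i, d i ≠ 0) (k : Fin n) : cmat π X' Y' d k k = 1 := by
  cases hp : Function.partialInv (⇑π) k with
  | some j =>
    have hπ : π j = k := (Function.partialInv_of_injective π.injective j k).1 hp
    have ht0 : Y' (π j) j ≠ 0 := by
      intro h
      exact hd0 j (by rw [← st_eq hXY hx0 hy0 j, h, mul_zero])
    subst hπ
    rw [cmat_col π X' Y' d (π j) j, mul_inv_cancel₀ ht0]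
  | none =>
    rw [cmat_none π X' Y' d hp k, if_pos rfl]
    rw [Finset.sum_eq_zero, sub_zero]
    intro j _
    rcases lt_trichotomy (π j) k with h | h | h
    · rw [hy0 j k h, mul_zero]
    · exact absurd h ((partialInv_none_iff π).1 hp j)
    · rw [hx0 j k h, zero_div, zero_mul]

end CmatFacts

section CmatProd
variable {m n : ℕ} {π : Fin m ↪ Fin n} {X' : Matrix (Fin m) (Fin n) ℂ}
  {Y' : Matrix (Fin n) (Fin m) ℂ} {d : Fin m → ℂ}

lemma X_mul_cmat (hXY : X' * Y' = Matrix.diagonal d)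
    (hx0 : ∀ (j : Fin m) (k : Fin n), k < π j → X' j k = 0)
    (hy0 : ∀ (j : Fin m) (k : Fin n), π j < k → Y' k j = 0)
    (hd0 : ∀ i, d i ≠ 0) :
    X' * cmat π X' Y' d
      = Matrix.diagonal (fun j => X' j (π j)) * permMat π := by
  ext j k
  rw [Matrix.mul_apply, Matrix.diagonal_mul]
  have ht0 : ∀ j', Y' (π j') j' ≠ 0 := fun j' h =>
    hd0 j' (by rw [← st_eq hXY hx0 hy0 j', h, mul_zero])
  cases hp : Function.partialInv (⇑π) k with
  | some j' =>
    have hπ : π j' = k := (Function.partialInv_of_injective π.injective j' k).1 hp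
    subst hπ
    have : ∀ l, X' j l * cmat π X' Y' d l (π j') = X' j l * Y' l j' * (Y' (π j') j')⁻¹ :=
      fun l => by rw [cmat_col π X' Y' d l j', mul_assoc]
    rw [Finset.sum_congr rfl fun l _ => this l, ← Finset.sum_mul, orth hXY j j']
    by_cases hjj : j = j'
    · subst hjj
      rw [if_pos rfl, permMat]
      rw [← st_eq hXY hx0 hy0 j, mul_assoc, mul_inv_cancel₀ (ht0 j), mul_one]
      simp
    · rw [if_neg hjj, zero_mul, permMat]
      simp only [EmbeddingLike.apply_eq_iff_eq]
      rw [if_neg hjj, mul_zero]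
  | none =>
    have hno : ∀ j', π j' ≠ k := (partialInv_none_iff π).1 hp
    have hout : permMat π j k = 0 := by rw [permMat, if_neg (hno j)]
    rw [hout, mul_zero]
    have hexp : ∀ l, X' j l * cmat π X' Y' d l k
        = X' j l * (if l = k then 1 else 0) - ∑ j', (X' j' k / d j') * (X' j l * Y' l j') := by
      intro l
      rw [cmat_none π X' Y' d hp l, mul_sub, Finset.mul_sum]
      congr 1
      exact Finset.sum_congr rfl fun j' _ => by ring
    rw [Finset.sum_congr rfl fun l _ => hexp l, Finset.sum_sub_distrib]
    have h1 : ∑ l, X' j l * (if l = k then 1 else 0) = X' j k := by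
      simp [mul_ite, Finset.sum_ite_eq']
    have h2 : ∑ l, ∑ j', (X' j' k / d j') * (X' j l * Y' l j') = X' j k := by
      rw [Finset.sum_comm]
      have : ∀ j', ∑ l, (X' j' k / d j') * (X' j l * Y' l j')
          = (X' j' k / d j') * (if j = j' then d j else 0) := by
        intro j'
        rw [← Finset.mul_sum, orth hXY j j']
      rw [Finset.sum_congr rfl fun j' _ => this j']
      rw [Finset.sum_eq_single j (fun j' _ hj' => by rw [if_neg (Ne.symm hj'), mul_zero])
        (fun h => absurd (Finset.mem_univ j) h)]
      rw [if_pos rfl, div_mul_cancel₀ _ (hd0 j)]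
    rw [h1, h2, sub_self]

lemma cmat_mul_Y (hXY : X' * Y' = Matrix.diagonal d)
    (hx0 : ∀ (j : Fin m) (k : Fin n), k < π j → X' j k = 0)
    (hy0 : ∀ (j : Fin m) (k : Fin n), π j < k → Y' k j = 0)
    (hd0 : ∀ i, d i ≠ 0) :
    cmat π X' Y' d * ((permMat π)ᵀ * Matrix.diagonal (fun j => Y' (π j) j)) = Y' := by
  have ht0 : ∀ j', Y' (π j') j' ≠ 0 := fun j' h =>
    hd0 j' (by rw [← st_eq hXY hx0 hy0 j', h, mul_zero])
  ext l j
  rw [← Matrix.mul_assoc, Matrix.mul_apply]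
  have hfac : ∀ k, (cmat π X' Y' d * (permMat π)ᵀ) l k * Matrix.diagonal (fun j => Y' (π j) j) k j
      = (cmat π X' Y' d * (permMat π)ᵀ) l k * (if k = j then Y' (π j) j else 0) := by
    intro k
    rw [Matrix.diagonal_apply]
    by_cases h : k = j
    · subst h; rfl
    · rw [if_neg h, if_neg h]
  rw [Finset.sum_congr rfl fun k _ => hfac k]
  rw [Finset.sum_eq_single j (fun k _ hk => by rw [if_neg hk, mul_zero])
    (fun h => absurd (Finset.mem_univ j) h), if_pos rfl]
  have hcP : (cmat π X' Y' d * (permMat π)ᵀ) l j = Y' l j * (Y' (π j) j)⁻¹ := by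
    rw [Matrix.mul_apply]
    rw [Finset.sum_eq_single (π j) (fun k _ hk => ?_) (fun h => absurd (Finset.mem_univ (π j)) h)]
    · rw [cmat_col π X' Y' d l j]
      have h1 : (permMat π)ᵀ (π j) j = 1 := by rw [Matrix.transpose_apply, permMat, if_pos rfl]
      rw [h1, mul_one]
    · have h0 : (permMat π)ᵀ k j = 0 := by
        rw [Matrix.transpose_apply, permMat, if_neg (fun h => hk h.symm)]
      rw [h0, mul_zero]
  rw [hcP, mul_assoc, inv_mul_cancel₀ (ht0 j), mul_one]

end CmatProd

section Perm
variable {m n : ℕ}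

lemma perm_mul_transpose (π : Fin m ↪ Fin n) : permMat π * (permMat π)ᵀ = 1 := by
  ext i i'
  rw [Matrix.mul_apply]
  rw [Finset.sum_eq_single (π i') (fun j _ hj => ?_) (fun h => absurd (Finset.mem_univ (π i')) h)]
  · rw [Matrix.transpose_apply]
    rw [show permMat π i' (π i') = 1 by rw [permMat, if_pos rfl], mul_one]
    rw [permMat, Matrix.one_apply]
    simp only [EmbeddingLike.apply_eq_iff_eq]
  · rw [Matrix.transpose_apply, show permMat π i' j = 0 by
      rw [permMat, if_neg (fun h => hj h.symm)], mul_zero]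

lemma Pt_diag_P_offdiag (π : Fin m ↪ Fin n) (w : Fin m → ℂ) {k l : Fin n} (hkl : k ≠ l) :
    ((permMat π)ᵀ * Matrix.diagonal w * permMat π) k l = 0 := by
  rw [Matrix.mul_apply]
  refine Finset.sum_eq_zero fun i _ => ?_
  rw [Matrix.mul_diagonal, Matrix.transpose_apply]
  simp only [permMat]
  by_cases h : π i = k
  · rw [if_neg (fun h' => hkl (h.symm.trans h')), mul_zero]
  · rw [if_neg h, zero_mul, zero_mul]

lemma Pt_diag_P_diag (π : Fin m ↪ Fin n) (w : Fin m → ℂ) (j : Fin m) :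
    ((permMat π)ᵀ * Matrix.diagonal w * permMat π) (π j) (π j) = w j := by
  rw [Matrix.mul_apply]
  rw [Finset.sum_eq_single j (fun i _ hi => ?_) (fun h => absurd (Finset.mem_univ j) h)]
  · rw [Matrix.mul_diagonal, Matrix.transpose_apply]
    simp [permMat]
  · rw [Matrix.mul_diagonal, Matrix.transpose_apply]
    simp only [permMat]
    rw [if_neg (fun h => hi (π.injective h)), zero_mul, zero_mul]

end Perm

/-- Lemma: `E°_π` equals the set of `(X,Y) ∈ E` with `(YX)_{π(i)π(i)} = (XY)_{ii}` for all `i`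
and the `(XY)_{ii}` pairwise distinct and nonzero. -/
theorem Eopen_eq (m n : ℕ) (hm : 1 ≤ m) (hmn : m ≤ n) (π : Fin m ↪ Fin n) :
    Eopen π = { p | p ∈ LU m n ∧ (∀ i : Fin m, (p.2 * p.1) (π i) (π i) = (p.1 * p.2) i i) ∧
      (∀ i : Fin m, (p.1 * p.2) i i ≠ 0) ∧
      (∀ i i' : Fin m, i ≠ i' → (p.1 * p.2) i i ≠ (p.1 * p.2) i' i') } := by
  ext p
  simp only [Set.mem_setOf_eq, Eopen, LU]
  constructor
  · rintro ⟨b, ⟨hbl, hbd⟩, c, ⟨hcu, hcd⟩, s, t, hst0, hstd, hX, hY⟩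
    have hbdet : IsUnit b.det := by
      rw [hbl.det]
      simp [hbd]
    have hcdet : IsUnit c.det := by
      rw [hcu.det]
      simp [hcd]
    have hbinv : LowerTri b⁻¹ := hbl.inv hbdet
    have hcinv : UpperTri c⁻¹ := hcu.inv hcdet
    have hPPT : permMat π * (permMat π)ᵀ = 1 := perm_mul_transpose π
    have hA : p.1 * p.2 = b * Matrix.diagonal (fun i => s i * t i) * b⁻¹ := by
      rw [hX, hY]
      simp only [Matrix.mul_assoc]
      rw [Matrix.nonsing_inv_mul_cancel_left _ _ hcdet]
      rw [← Matrix.mul_assoc (permMat π) ((permMat π)ᵀ), hPPT, Matrix.one_mul]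
      rw [← Matrix.mul_assoc (Matrix.diagonal s) (Matrix.diagonal t),
        Matrix.diagonal_mul_diagonal]
    set N := (permMat π)ᵀ * Matrix.diagonal (fun i => t i * s i) * permMat π with hN
    have hB : p.2 * p.1 = c * N * c⁻¹ := by
      rw [hX, hY, hN]
      simp only [Matrix.mul_assoc]
      rw [Matrix.nonsing_inv_mul_cancel_left _ _ hbdet]
      rw [← Matrix.mul_assoc (Matrix.diagonal t) (Matrix.diagonal s),
        Matrix.diagonal_mul_diagonal]
    have hNu : UpperTri N := fun k l h => Pt_diag_P_offdiag π _ (ne_of_gt h)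
    have hdiagLower : LowerTri (Matrix.diagonal (fun i => s i * t i)) :=
      fun i j h => Matrix.diagonal_apply_ne _ (ne_of_lt h)
    have hAl : LowerTri (p.1 * p.2) := by
      rw [hA]
      exact (hbl.mul hdiagLower).mul hbinv
    have hBu : UpperTri (p.2 * p.1) := by
      rw [hB]
      exact (hcu.mul hNu).mul hcinv
    have hbinv1 : ∀ i, b⁻¹ i i = 1 := by
      intro i
      have := hbl.diag_inv_mul hbdet i
      rwa [hbd i, one_mul] at this
    have hcinv1 : ∀ k, c⁻¹ k k = 1 := by
      intro k
      have := hcu.diag_inv_mul hcdet k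
      rwa [hcd k, one_mul] at this
    have hAdiag : ∀ i, (p.1 * p.2) i i = s i * t i := by
      intro i
      rw [hA, (hbl.mul hdiagLower).mul_diag hbinv, hbl.mul_diag hdiagLower,
        Matrix.diagonal_apply_eq, hbd i, hbinv1 i, one_mul, mul_one]
    have hBdiag : ∀ i, (p.2 * p.1) (π i) (π i) = t i * s i := by
      intro i
      rw [hB, (hcu.mul hNu).mul_diag hcinv, hcu.mul_diag hNu, hN, Pt_diag_P_diag,
        hcd, hcinv1, one_mul, mul_one]
    refine ⟨⟨hAl, hBu⟩, fun i => ?_, fun i => ?_, fun i i' hii => ?_⟩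
    · rw [hBdiag i, hAdiag i]
      ring
    · rw [hAdiag i]
      exact hst0 i
    · rw [hAdiag i, hAdiag i']
      exact hstd i i' hii
  · rintro ⟨⟨hAl, hBu⟩, hmatch, hnz, hdist⟩
    set d : Fin m → ℂ := fun i => (p.1 * p.2) i i with hd
    set b := bmat (p.1 * p.2) with hbdef
    have hbl : LowerTri b := bmat_lower _
    have hbd1 : ∀ i, b i i = 1 := bmat_diag _
    have hAb : (p.1 * p.2) * b = b * Matrix.diagonal d := bmat_conj _ hAl hdist
    have hbdet : IsUnit b.det := by
      rw [hbl.det]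
      simp [hbd1]
    set X' := b⁻¹ * p.1 with hX'
    set Y' := p.2 * b with hY'
    have hXY : X' * Y' = Matrix.diagonal d := by
      rw [hX', hY']
      calc b⁻¹ * p.1 * (p.2 * b) = b⁻¹ * (p.1 * p.2 * b) := by simp only [Matrix.mul_assoc]
        _ = b⁻¹ * (b * Matrix.diagonal d) := by rw [hAb]
        _ = Matrix.diagonal d := Matrix.nonsing_inv_mul_cancel_left _ _ hbdet
    have hYX : Y' * X' = p.2 * p.1 := by
      rw [hY', hX']
      calc p.2 * b * (b⁻¹ * p.1) = p.2 * (b * (b⁻¹ * p.1)) := by simp only [Matrix.mul_assoc]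
        _ = p.2 * p.1 := by rw [Matrix.mul_nonsing_inv_cancel_left _ _ hbdet]
    have hd0 : ∀ i, d i ≠ 0 := hnz
    have huniq : ∀ (j : Fin m) (k : Fin n), (Y' * X') k k = d j → k = π j := by
      intro j k hk
      have hBu' : UpperTri (Y' * X') := by rw [hYX]; exact hBu
      have hπj : (Y' * X') (π j) (π j) = d j := by rw [hYX]; exact hmatch j
      exact diag_unique X' Y' d hXY hBu' hd0 hdist hk hπj
    have hy0 : ∀ (j : Fin m) (k : Fin n), π j < k → Y' k j = 0 := by
      intro j
      refine y_support (B := Y' * X') ?_ ?_ j (π j) (fun k hk => huniq j k hk)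
      · rw [hYX]; exact hBu
      · calc (Y' * X') * Y' = Y' * (X' * Y') := by simp only [Matrix.mul_assoc]
          _ = Y' * Matrix.diagonal d := by rw [hXY]
    have hx0 : ∀ (j : Fin m) (k : Fin n), k < π j → X' j k = 0 := by
      intro j
      refine x_support (B := Y' * X') ?_ ?_ j (π j) (fun k hk => huniq j k hk)
      · rw [hYX]; exact hBu
      · calc X' * (Y' * X') = (X' * Y') * X' := by simp only [Matrix.mul_assoc]
          _ = Matrix.diagonal d * X' := by rw [hXY]
    set c := cmat π X' Y' d with hcdef
    have hcu : UpperTri c := cmat_upper hXY hx0 hy0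
    have hcd1 : ∀ k, c k k = 1 := cmat_diag hXY hx0 hy0 hd0
    have hcdet : IsUnit c.det := by
      rw [hcu.det]
      simp [hcd1]
    refine ⟨b, ⟨hbl, hbd1⟩, c, ⟨hcu, hcd1⟩, (fun j => X' j (π j)), (fun j => Y' (π j) j),
      fun i => ?_, fun i i' hii => ?_, ?_, ?_⟩
    · rw [st_eq hXY hx0 hy0 i]
      exact hd0 i
    · rw [st_eq hXY hx0 hy0 i, st_eq hXY hx0 hy0 i']
      exact hdist i i' hii
    · have h1 : Matrix.diagonal (fun j => X' j (π j)) * permMat π = X' * c :=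
        (X_mul_cmat hXY hx0 hy0 hd0).symm
      rw [h1]
      calc p.1 = b * X' := by rw [hX', Matrix.mul_nonsing_inv_cancel_left _ _ hbdet]
        _ = b * X' * c * c⁻¹ := (Matrix.mul_nonsing_inv_cancel_right _ _ hcdet).symm
        _ = b * (X' * c) * c⁻¹ := by rw [Matrix.mul_assoc b X' c]
    · have h2 : c * ((permMat π)ᵀ * Matrix.diagonal (fun j => Y' (π j) j)) = Y' :=
        cmat_mul_Y hXY hx0 hy0 hd0
      calc p.2 = p.2 * b * b⁻¹ := (Matrix.mul_nonsing_inv_cancel_right _ _ hbdet).symm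
        _ = Y' * b⁻¹ := by rw [← hY']
        _ = c * ((permMat π)ᵀ * Matrix.diagonal (fun j => Y' (π j) j)) * b⁻¹ := by rw [h2]
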